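/- Let m, q ≥ 2 and define C(k) = k(m(q - q^3)(k + mq) + m^2 q^2 - 1)/(k + mq) - m^2 q (q^3 - 2q^2 + 1) and c(k) = (m^2 - 1) q (k + mq - m)/(q(k + mq - m) + m), for rational k with k ≠ -mq and q(k+mq-m)+m ≠ 0. Then the rational solutions of C(k) = c(k) are exactly k = -mq^2/(q+1), k = (-mq^2 + mq - 1)/q, and k = (-mq^2 + mq + 1)/q. -/

import Mathlib

/-- equality of the central charge of the rectangular W-algebra
`W^k(sl(mq), x, f_{[m,q]})` with the Sugawara central charge of its affine part
characterizes the three conformal levels. -/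
theorem stmt17 (m q : ℕ) (hm : 2 ≤ m) (hq : 2 ≤ q) (k : ℚ)
    (h1 : k ≠ -((m : ℚ) * q))
    (h2 : (q : ℚ) * (k + m * q - m) + m ≠ 0) :
    (k * ((m : ℚ) * ((q : ℚ) - (q : ℚ) ^ 3) * (k + m * q) + (m : ℚ) ^ 2 * (q : ℚ) ^ 2 - 1)
        / (k + m * q)
        - (m : ℚ) ^ 2 * q * ((q : ℚ) ^ 3 - 2 * (q : ℚ) ^ 2 + 1)
      = ((m : ℚ) ^ 2 - 1) * q * (k + m * q - m) / ((q : ℚ) * (k + m * q - m) + m))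
    ↔ (k = -((m : ℚ) * (q : ℚ) ^ 2) / ((q : ℚ) + 1)
        ∨ k = (-(m : ℚ) * (q : ℚ) ^ 2 + m * q - 1) / q
        ∨ k = (-(m : ℚ) * (q : ℚ) ^ 2 + m * q + 1) / q) := by
  have hmQ : (2:ℚ) ≤ (m:ℚ) := by exact_mod_cast hm
  have hqQ : (2:ℚ) ≤ (q:ℚ) := by exact_mod_cast hq
  have hq0 : (q:ℚ) ≠ 0 := by linarith
  have hq1 : (q:ℚ) + 1 ≠ 0 := by linarith
  have hmq1 : (m:ℚ) * ((q:ℚ) - 1) ≠ 0 := by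
    apply mul_ne_zero <;> intro h <;> nlinarith [h]
  have hd1 : k + (m:ℚ) * q ≠ 0 := by
    intro h; exact h1 (by linarith)
  have key : (k * ((m : ℚ) * ((q : ℚ) - (q : ℚ) ^ 3) * (k + m * q) + (m : ℚ) ^ 2 * (q : ℚ) ^ 2 - 1)
        / (k + m * q)
        - (m : ℚ) ^ 2 * q * ((q : ℚ) ^ 3 - 2 * (q : ℚ) ^ 2 + 1)
      = ((m : ℚ) ^ 2 - 1) * q * (k + m * q - m) / ((q : ℚ) * (k + m * q - m) + m))
      ↔ (((q:ℚ) + 1) * k + m * (q:ℚ)^2) * (((q:ℚ) * k + m * (q:ℚ)^2 - m * q + 1) *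
          ((q:ℚ) * k + m * (q:ℚ)^2 - m * q - 1)) = 0 := by
    rw [div_sub' hd1, div_eq_div_iff hd1 h2]
    constructor
    · intro h
      have h' : (m:ℚ) * ((q:ℚ) - 1) *
          ((((q:ℚ) + 1) * k + m * (q:ℚ)^2) * (((q:ℚ) * k + m * (q:ℚ)^2 - m * q + 1) *
          ((q:ℚ) * k + m * (q:ℚ)^2 - m * q - 1))) = 0 := by linear_combination -h
      exact (mul_eq_zero.1 h').resolve_left hmq1
    · intro h
      linear_combination (-(m:ℚ) * ((q:ℚ) - 1)) * h
  rw [key, mul_eq_zero, mul_eq_zero]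
  constructor
  · rintro (h | h | h)
    · left
      field_simp
      linarith
    · right; left
      field_simp
      linarith
    · right; right
      field_simp
      linarith
  · rintro (h | h | h)
    · left
      rw [h]; field_simp; ring
    · right; left
      rw [h]; field_simp; ring
    · right; right
      rw [h]; field_simp; ring
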